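/- Let (X,d) be a metric space and F a finite family of self-maps of X such that for every compact K ⊆ X, sup_{f ∈ F^{≥n}} diam_d(f(K)) → 0 as n → ∞ (compact contractivity). Fix a strictly increasing sequence (α_n) with α_0 = 1 and sup_n α_n ≤ 2, and define d̂(x,y) = sup_{n∈ω} max_{f∈F^n} α_n · d(f(x), f(y)). Then d ≤ d̂ ≤ 2·diam_d(X), and F is Edelstein contracting with respect to d̂: for every f ∈ F and x,y ∈ X with d̂(f(x),f(y)) > 0, we have d̂(f(x),f(y)) < d̂(x,y). -/

import Mathlib

open Filter Topology ENNReal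

/-- The set `F^n` of all compositions of `n` members of a family `F` of self-maps. -/
def comps {X : Type*} (F : Set (X → X)) : ℕ → Set (X → X)
  | 0 => {id}
  | n + 1 => Set.image2 (· ∘ ·) (comps F n) F

lemma comps_finite {X : Type*} {F : Set (X → X)} (hfin : F.Finite) :
    ∀ n, (comps F n).Finite
  | 0 => Set.finite_singleton id
  | n + 1 => Set.Finite.image2 _ (comps_finite hfin n) hfin

/-- For a bounded metric space `(X, d)` and a compactly contracting finite family `F` of
self-maps, the pseudometric `d̂(x,y) = sup_n max_{f ∈ F^n} α_n · d(f x, f y)` satisfies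
`d ≤ d̂ ≤ 2 · diam X` and makes `F` Edelstein contracting. -/
theorem dhat_edelstein {X : Type*} [MetricSpace X]
    (hbd : EMetric.diam (Set.univ : Set X) ≠ ⊤)
    (F : Set (X → X)) (hfin : F.Finite)
    (hcc : ∀ K : Set X, IsCompact K →
      Tendsto (fun n => ⨆ m, ⨆ (_ : n ≤ m), ⨆ f ∈ comps F m, EMetric.diam (f '' K))
        atTop (𝓝 0))
    (α : ℕ → ℝ≥0∞) (hα0 : α 0 = 1) (hαmono : StrictMono α) (hα2 : ∀ n, α n ≤ 2) :
    let dhat : X → X → ℝ≥0∞ := fun x y => ⨆ n, ⨆ f ∈ comps F n, α n * edist (f x) (f y)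
    (∀ x y : X, edist x y ≤ dhat x y) ∧
    (∀ x y : X, dhat x y ≤ 2 * EMetric.diam (Set.univ : Set X)) ∧
    (∀ f ∈ F, ∀ x y : X, 0 < dhat (f x) (f y) → dhat (f x) (f y) < dhat x y) := by
  intro dhat
  have hub : ∀ x y : X, dhat x y ≤ 2 * EMetric.diam (Set.univ : Set X) := by
    intro x y
    refine iSup_le fun n => iSup₂_le fun g hg => ?_
    exact mul_le_mul' (hα2 n)
      (EMetric.edist_le_diam_of_mem (Set.mem_univ _) (Set.mem_univ _))
  refine ⟨fun x y => ?_, hub, ?_⟩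
  · have h0 : (id : X → X) ∈ comps F 0 := rfl
    calc edist x y = α 0 * edist (id x) (id y) := by simp [hα0]
      _ ≤ dhat x y := le_iSup_of_le 0 (le_iSup₂_of_le id h0 le_rfl)
  · intro f hf x y hpos
    set K : Set X := {f x, f y} with hKdef
    have hK : IsCompact K := (((Set.finite_singleton (f y)).insert (f x)).isCompact)
    set t : ℕ → ℝ≥0∞ := fun n => ⨆ g ∈ comps F n, α n * edist (g (f x)) (g (f y)) with ht
    have hDt : dhat (f x) (f y) = ⨆ n, t n := rfl
    set D := dhat (f x) (f y) with hD
    have hDtop : D ≠ ⊤ := by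
      refine ne_top_of_le_ne_top ?_ (hub (f x) (f y))
      exact ENNReal.mul_ne_top (by norm_num) hbd
    -- choose N such that the tail sup is < D/2
    have hhalf : (0 : ℝ≥0∞) < D / 2 := ENNReal.div_pos hpos.ne' (by norm_num)
    obtain ⟨N, hN⟩ := ((hcc K hK).eventually (gt_mem_nhds hhalf)).exists
    set s : ℝ≥0∞ := ⨆ m, ⨆ (_ : N ≤ m), ⨆ g ∈ comps F m, EMetric.diam (g '' K) with hs
    have hsD : 2 * s < D := by
      calc 2 * s < 2 * (D / 2) :=
            ENNReal.mul_lt_mul_right (by norm_num) (by norm_num) hN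
        _ = D := ENNReal.mul_div_cancel (by norm_num) (by norm_num)
    -- tail terms are small
    have htail : ∀ n, N ≤ n → t n ≤ 2 * s := by
      intro n hn
      refine iSup₂_le fun g hg => ?_
      have hmem1 : g (f x) ∈ g '' K := ⟨f x, by simp [hKdef], rfl⟩
      have hmem2 : g (f y) ∈ g '' K := ⟨f y, by simp [hKdef], rfl⟩
      calc α n * edist (g (f x)) (g (f y))
          ≤ 2 * EMetric.diam (g '' K) :=
            mul_le_mul' (hα2 n) (EMetric.edist_le_diam_of_mem hmem1 hmem2)
        _ ≤ 2 * s := by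
            refine mul_le_mul_right ?_ 2
            exact le_iSup_of_le n (le_iSup_of_le hn (le_iSup₂_of_le g hg le_rfl))
    -- D is attained on n < N
    have hDle : D ≤ (Finset.range N).sup t := by
      have : D ≤ max ((Finset.range N).sup t) (2 * s) := by
        rw [hDt]
        refine iSup_le fun n => ?_
        rcases lt_or_ge n N with h | h
        · exact le_max_of_le_left (Finset.le_sup (Finset.mem_range.mpr h))
        · exact le_max_of_le_right (htail n h)
      rcases max_cases ((Finset.range N).sup t) (2 * s) with ⟨he, _⟩ | ⟨he, _⟩
      · rwa [he] at this
      · rw [he] at this; exact absurd (lt_of_le_of_lt this hsD) (lt_irrefl D)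
    have hrangene : (Finset.range N).Nonempty := by
      rcases Finset.eq_empty_or_nonempty (Finset.range N) with h | h
      · rw [h] at hDle; simp at hDle
        exact absurd hDle (by simpa [hDle] using hpos.ne')
      · exact h
    obtain ⟨n, _, hn⟩ := Finset.exists_mem_eq_sup (Finset.range N) hrangene t
    have htnD : t n = D := le_antisymm (hDt ▸ le_iSup t n) (hn ▸ hDle)
    -- attain the inner sup
    have hcfin := comps_finite (F := F) hfin n
    have htn : t n = hcfin.toFinset.sup (fun g => α n * edist (g (f x)) (g (f y))) := by
      rw [ht, Finset.sup_eq_iSup]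
      simp only [Set.Finite.mem_toFinset]
    have hcne : hcfin.toFinset.Nonempty := by
      rcases Finset.eq_empty_or_nonempty hcfin.toFinset with h | h
      · rw [h] at htn; simp at htn
        exact absurd (htnD ▸ htn) hpos.ne'
      · exact h
    obtain ⟨g, hgmem, hg⟩ :=
      Finset.exists_mem_eq_sup hcfin.toFinset hcne
        (fun g => α n * edist (g (f x)) (g (f y)))
    have hgF : g ∈ comps F n := hcfin.mem_toFinset.mp hgmem
    have hDval : D = α n * edist (g (f x)) (g (f y)) := by rw [← htnD, htn, hg]
    set e : ℝ≥0∞ := edist (g (f x)) (g (f y)) with he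
    have he0 : e ≠ 0 := by
      intro h
      rw [hDval, h, mul_zero] at hpos
      exact lt_irrefl _ (hpos.trans_le (le_refl 0))
    have hetop : e ≠ ⊤ := edist_ne_top _ _
    have hgf : (g ∘ f) ∈ comps F (n + 1) := Set.mem_image2_of_mem hgF hf
    calc D = α n * e := hDval
      _ < α (n + 1) * e := by
          exact ENNReal.mul_lt_mul_left he0 hetop (hαmono (Nat.lt_succ_self n))
      _ = α (n + 1) * edist ((g ∘ f) x) ((g ∘ f) y) := rfl
      _ ≤ dhat x y := le_iSup_of_le (n + 1) (le_iSup₂_of_le (g ∘ f) hgf le_rfl)
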